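/- (Two-cluster equilibrium criterion.) Let N ≥ 2, 1 ≤ p ≤ N−1, and a, b, α ∈ ℝ. Define θ_i = a for 1 ≤ i ≤ p and θ_i = b for p+1 ≤ i ≤ N. Then the quantities g_i(θ,α) = −∑_{j=1}^N sin(θ_i − θ_j − α) take the same value for all i = 1,…,N if and only if N cos α · sin(a−b) = (N − 2p) sin α · (cos(a−b) − 1). In particular, every two-cluster configuration with a given cluster partition (p : N−p) is an equilibrium of the phase-difference system exactly for the phase separations δ = a−b solving this scalar trigonometric equation. -/

import Mathlib

open Real Finset

lemma sum_ite_fin (N p : ℕ) (hp : p ≤ N) (x y : ℝ) :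
    ∑ j : Fin N, (if (j : ℕ) < p then x else y) = (p : ℝ) * x + ((N : ℝ) - p) * y := by
  rw [Fin.sum_univ_eq_sum_range (fun n => if n < p then x else y) N,
    Finset.range_eq_Ico, ← Finset.sum_Ico_consecutive _ (Nat.zero_le p) hp,
    Finset.sum_congr rfl (fun i hi => if_pos (Finset.mem_Ico.mp hi).2),
    Finset.sum_congr rfl (fun i hi => if_neg (not_lt.mpr (Finset.mem_Ico.mp hi).1)),
    Finset.sum_const, Finset.sum_const, Nat.card_Ico, Nat.card_Ico]
  simp only [nsmul_eq_mul, Nat.sub_zero, Nat.cast_sub hp]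

/-- Two-cluster equilibrium criterion: for the two-cluster configuration with
`p` phases equal to `a` and `N - p` phases equal to `b`, the quantities
`g_i(θ,α) = -∑_j sin(θ_i - θ_j - α)` all coincide if and only if
`N cos α · sin(a-b) = (N - 2p) sin α · (cos(a-b) - 1)`. -/
theorem stmt_3 (N p : ℕ) (hN : 2 ≤ N) (hp1 : 1 ≤ p) (hp2 : p ≤ N - 1)
    (a b α : ℝ) (θ : Fin N → ℝ)
    (hθ : ∀ i : Fin N, θ i = if (i : ℕ) < p then a else b) :
    (∀ i i' : Fin N,
        -(∑ j, Real.sin (θ i - θ j - α)) = -(∑ j, Real.sin (θ i' - θ j - α)))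
    ↔ (N : ℝ) * Real.cos α * Real.sin (a - b)
        = ((N : ℝ) - 2 * p) * Real.sin α * (Real.cos (a - b) - 1) := by
  have hpN : p < N := lt_of_le_of_lt hp2 (Nat.sub_lt (by omega) one_pos)
  have hsum : ∀ c : ℝ, (∑ j, Real.sin (c - θ j - α))
      = (p : ℝ) * Real.sin (c - a - α) + ((N : ℝ) - p) * Real.sin (c - b - α) := by
    intro c
    rw [show (∑ j, Real.sin (c - θ j - α))
        = ∑ j : Fin N, (if (j : ℕ) < p then Real.sin (c - a - α) else Real.sin (c - b - α)) from
      Finset.sum_congr rfl (fun j _ => by rw [hθ j]; split <;> rfl)]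
    exact sum_ite_fin N p hpN.le _ _
  have geq : ∀ i : Fin N, -(∑ j, Real.sin (θ i - θ j - α))
      = if (i : ℕ) < p
        then -((p : ℝ) * Real.sin (a - a - α) + ((N : ℝ) - p) * Real.sin (a - b - α))
        else -((p : ℝ) * Real.sin (b - a - α) + ((N : ℝ) - p) * Real.sin (b - b - α)) := by
    intro i
    rw [hθ i]
    split <;> rw [hsum]
  have trig : (-((p : ℝ) * Real.sin (a - a - α) + ((N : ℝ) - p) * Real.sin (a - b - α))
      = -((p : ℝ) * Real.sin (b - a - α) + ((N : ℝ) - p) * Real.sin (b - b - α)))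
      ↔ (N : ℝ) * Real.cos α * Real.sin (a - b)
        = ((N : ℝ) - 2 * p) * Real.sin α * (Real.cos (a - b) - 1) := by
    rw [show a - a - α = -α by ring, show b - b - α = -α by ring,
      show b - a - α = -((a - b) + α) by ring,
      show a - b - α = (a - b) - α from rfl, Real.sin_sub]
    simp only [Real.sin_neg, Real.sin_add]
    constructor <;> intro h <;> linear_combination -h
  constructor
  · intro h
    exact trig.mp (by
      have := h ⟨0, by omega⟩ ⟨p, hpN⟩
      rwa [geq, geq, if_pos (by simp; omega), if_neg (by simp)] at this)
  · intro h i i'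
    rw [geq i, geq i']
    have e := trig.mpr h
    split <;> split <;> first | rfl | exact e | exact e.symm
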